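/- (Soundness of the axiomatic characterization.) Suppose the verdict function vf satisfies: Verifiability (vf t = ∅ ↔ sat t), Minimality (S ∈ vf t → ¬∃ S' ∈ vf t, S' ⊊ S), Sufficiency (S ∈ vf t → ∃ t', vf t' = {S} ∧ cor t' ⊆ S ∧ r t t'), Uniqueness (S ∈ vf t → S ⊆ cor t), and Completeness (if there exists t' with vf t' = {S}, cor t' ⊆ S, r t t', and no S' ∈ vf t with S' ⊊ S, and S ⊆ cor t, and ¬ sat t, then S ∈ vf t). Assume r is reflexive and transitive and satisfies r t t' → cor t' ⊆ cor t. Then for every trace t, vf t = apv t. -/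
import Mathlib


theorem stmt4 {T P : Type*} (sat : T → Prop) (cor : T → Finset P)
    (r : T → T → Prop) (hrefl : ∀ t, r t t)
    (htrans : ∀ a b c, r a b → r b c → r a c)
    (hcor : ∀ t t', r t t' → cor t' ⊆ cor t)
    (vf : T → Set (Finset P))
    (apv : T → Set (Finset P))
    (happv : ∀ t, apv t = {S | ¬ sat t ∧ (∃ t', r t t' ∧ cor t' = S ∧ ¬ sat t') ∧
      ¬ ∃ t'', r t t'' ∧ cor t'' ⊂ S ∧ ¬ sat t''})
    (hVer : ∀ t, vf t = ∅ ↔ sat t)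
    (hMin : ∀ t S, S ∈ vf t → ¬ ∃ S' ∈ vf t, S' ⊂ S)
    (hSuff : ∀ t S, S ∈ vf t → ∃ t', vf t' = {S} ∧ cor t' ⊆ S ∧ r t t')
    (hUniq : ∀ t S, S ∈ vf t → S ⊆ cor t)
    (hComp : ∀ t S, (∃ t', vf t' = {S} ∧ cor t' ⊆ S ∧ r t t') →
      (¬ ∃ S' ∈ vf t, S' ⊂ S) → S ⊆ cor t → ¬ sat t → S ∈ vf t) :
    ∀ t, vf t = apv t := by
  intro t
  ext S
  rw [happv]
  simp only [Set.mem_setOf_eq]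
  constructor
  · intro hS
    have hnsat : ¬ sat t := by
      intro h
      rw [← hVer t] at h
      rw [h] at hS
      exact hS
    obtain ⟨t', hvf', hc', hr'⟩ := hSuff t S hS
    have hSmem' : S ∈ vf t' := by rw [hvf']; rfl
    have hcor' : cor t' = S := Finset.Subset.antisymm hc' (hUniq t' S hSmem')
    have hnsat' : ¬ sat t' := by
      intro h
      rw [(hVer t').mpr h] at hSmem'
      exact hSmem'
    refine ⟨hnsat, ⟨t', hr', hcor', hnsat'⟩, ?_⟩
    rintro ⟨t'', hr'', hsub, hns''⟩
    have hne : (vf t'').Nonempty := by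
      rw [Set.nonempty_iff_ne_empty]
      intro h
      exact hns'' ((hVer t'').mp h)
    obtain ⟨S'', hS''⟩ := hne
    obtain ⟨t₃, hvf₃, hc₃, hr₃⟩ := hSuff t'' S'' hS''
    have hrt₃ : r t t₃ := htrans _ _ _ hr'' hr₃
    have key : ∃ S' ∈ vf t, S' ⊆ S'' := by
      by_cases hx : ∃ S' ∈ vf t, S' ⊂ S''
      · obtain ⟨S', h1, h2⟩ := hx
        exact ⟨S', h1, h2.subset⟩
      · have hmem : S'' ∈ vf t₃ := by rw [hvf₃]; rfl
        have hc : S'' ⊆ cor t := (hUniq t₃ S'' hmem).trans (hcor t t₃ hrt₃)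
        exact ⟨S'', hComp t S'' ⟨t₃, hvf₃, hc₃, hrt₃⟩ hx hc hnsat, Finset.Subset.refl _⟩
    obtain ⟨S', h1, h2⟩ := key
    have hlt : S' ⊂ S :=
      ssubset_of_subset_of_ssubset (h2.trans (hUniq t'' S'' hS'')) hsub
    exact hMin t S hS ⟨S', h1, hlt⟩
  · rintro ⟨hnsat, ⟨t', hr', hcor', hnsat'⟩, hmin⟩
    have hne : (vf t').Nonempty := by
      rw [Set.nonempty_iff_ne_empty]
      intro h
      exact hnsat' ((hVer t').mp h)
    obtain ⟨S₁, hS₁⟩ := hne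
    have hS₁sub : S₁ ⊆ S := by
      have := hUniq t' S₁ hS₁
      rwa [hcor'] at this
    obtain ⟨t₂, hvf₂, hc₂, hr₂⟩ := hSuff t' S₁ hS₁
    have hrt₂ : r t t₂ := htrans _ _ _ hr' hr₂
    have hmem₂ : S₁ ∈ vf t₂ := by rw [hvf₂]; rfl
    have hcor₂ : cor t₂ = S₁ := Finset.Subset.antisymm hc₂ (hUniq t₂ S₁ hmem₂)
    have hnsat₂ : ¬ sat t₂ := by
      intro h
      rw [(hVer t₂).mpr h] at hmem₂
      exact hmem₂
    have hSeq : S₁ = S := by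
      by_contra hne'
      exact hmin ⟨t₂, hrt₂, by rw [hcor₂]; exact ssubset_of_subset_of_ne hS₁sub hne', hnsat₂⟩
    subst hSeq
    have hnomin : ¬ ∃ S' ∈ vf t, S' ⊂ S₁ := by
      rintro ⟨S', hS'mem, hS'sub⟩
      obtain ⟨t₄, hvf₄, hc₄, hr₄⟩ := hSuff t S' hS'mem
      have hmem₄ : S' ∈ vf t₄ := by rw [hvf₄]; rfl
      have hcor₄ : cor t₄ = S' := Finset.Subset.antisymm hc₄ (hUniq t₄ S' hmem₄)
      have hnsat₄ : ¬ sat t₄ := by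
        intro h
        rw [(hVer t₄).mpr h] at hmem₄
        exact hmem₄
      exact hmin ⟨t₄, hr₄, by rw [hcor₄]; exact hS'sub, hnsat₄⟩
    have hScor : S₁ ⊆ cor t := by
      have := hcor t t₂ hrt₂
      rwa [hcor₂] at this
    exact hComp t S₁ ⟨t₂, hvf₂, hc₂, hrt₂⟩ hnomin hScor hnsat
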